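/- arXiv:0709.4495 — 4 statements merged into one kernel-verified Lean document; each statement's English description precedes it below -/
import Mathlib

section
/- Let (B,ρ,𝔹) be a local contact algebra. Define aC_ρb iff aρb or (a ∉ 𝔹 and b ∉ 𝔹). Then (B, C_ρ) is a normal contact algebra. -/
variable {B : Type*} [BooleanAlgebra B]

/-- A contact relation on a Boolean algebra: axioms (C1)-(C4). -/
def IsContactRel (C : B → B → Prop) : Prop :=
  (∀ a, a ≠ ⊥ → C a a) ∧
  (∀ a b, C a b → a ≠ ⊥ ∧ b ≠ ⊥) ∧
  (∀ a b, C a b → C b a) ∧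
  (∀ a b c, C a (b ⊔ c) ↔ C a b ∨ C a c)

/-- A normal contact relation: additionally axioms (C5) and (C6). -/
def IsNormalContactRel (C : B → B → Prop) : Prop :=
  IsContactRel C ∧
  (∀ a b, ¬ C a b → ∃ c, ¬ C a c ∧ ¬ C b cᶜ) ∧
  (∀ a, a ≠ ⊤ → ∃ b, b ≠ ⊥ ∧ ¬ C b a)

/-- A cluster in a contact algebra: axioms (K1)-(K3). -/
def IsCluster (C : B → B → Prop) (σ : Set B) : Prop :=
  σ.Nonempty ∧
  (∀ a ∈ σ, ∀ b ∈ σ, C a b) ∧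
  (∀ a b, a ⊔ b ∈ σ → a ∈ σ ∨ b ∈ σ) ∧
  (∀ a, (∀ b ∈ σ, C a b) → a ∈ σ)

/-- An ultrafilter in a Boolean algebra, as a set. -/
def IsUltrafilterSet (u : Set B) : Prop :=
  ⊤ ∈ u ∧ ⊥ ∉ u ∧
  (∀ a b, a ∈ u → a ≤ b → b ∈ u) ∧
  (∀ a b, a ∈ u → b ∈ u → a ⊓ b ∈ u) ∧
  (∀ a : B, a ∈ u ∨ aᶜ ∈ u)

/-- Non-tangential inclusion: a ≪ b iff ¬(a ρ bᶜ). -/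
def Ntangle (ρ : B → B → Prop) (a b : B) : Prop := ¬ ρ a bᶜ

/-- An ideal in a Boolean algebra, as a set. -/
def IsIdealSet (I : Set B) : Prop :=
  ⊥ ∈ I ∧ (∀ a b, b ∈ I → a ≤ b → a ∈ I) ∧ (∀ a b, a ∈ I → b ∈ I → a ⊔ b ∈ I)

/-- A local contact algebra structure: ρ is a contact relation and I is an
ideal satisfying axioms (BC1)-(BC3). -/
def IsLocalContact (ρ : B → B → Prop) (I : Set B) : Prop :=
  IsContactRel ρ ∧ IsIdealSet I ∧
  (∀ a ∈ I, ∀ c, Ntangle ρ a c → ∃ b ∈ I, Ntangle ρ a b ∧ Ntangle ρ b c) ∧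
  (∀ a b, ρ a b → ∃ c ∈ I, ρ a (c ⊓ b)) ∧
  (∀ a : B, a ≠ ⊥ → ∃ b ∈ I, b ≠ ⊥ ∧ Ntangle ρ b a)

/-- The Alexandroff extension C_ρ of ρ. -/
def AlexExt (ρ : B → B → Prop) (I : Set B) (a b : B) : Prop :=
  ρ a b ∨ (a ∉ I ∧ b ∉ I)

/-- The Alexandroff extension of the contact relation of a local contact
algebra is a normal contact relation. -/
theorem alexExt_isNormalContact (ρ : B → B → Prop) (I : Set B)
    (h : IsLocalContact ρ I) : IsNormalContactRel (AlexExt ρ I) := by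
  obtain ⟨⟨hC1, hC2, hC3, hC4⟩, ⟨hbot, hdown, hsup⟩, hBC1, hBC2, hBC3⟩ := h
  refine ⟨⟨?_, ?_, ?_, ?_⟩, ?_, ?_⟩
  · intro a ha; exact Or.inl (hC1 a ha)
  · rintro a b (hab | ⟨ha, hb⟩)
    · exact hC2 a b hab
    · exact ⟨fun e => ha (e ▸ hbot), fun e => hb (e ▸ hbot)⟩
  · rintro a b (hab | ⟨ha, hb⟩)
    · exact Or.inl (hC3 a b hab)
    · exact Or.inr ⟨hb, ha⟩
  · intro a b c
    constructor
    · rintro (hab | ⟨ha, hbc⟩)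
      · rcases (hC4 a b c).mp hab with h' | h'
        · exact Or.inl (Or.inl h')
        · exact Or.inr (Or.inl h')
      · by_cases hb : b ∈ I
        · refine Or.inr (Or.inr ⟨ha, fun hc => hbc (hsup b c hb hc)⟩)
        · exact Or.inl (Or.inr ⟨ha, hb⟩)
    · rintro ((hab | ⟨ha, hb⟩) | (hac | ⟨ha, hc⟩))
      · exact Or.inl ((hC4 a b c).mpr (Or.inl hab))
      · exact Or.inr ⟨ha, fun hbc => hb (hdown b (b ⊔ c) hbc le_sup_left)⟩
      · exact Or.inl ((hC4 a b c).mpr (Or.inr hac))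
      · exact Or.inr ⟨ha, fun hbc => hc (hdown c (b ⊔ c) hbc le_sup_right)⟩
  · -- (C5)
    intro a b hnab
    have hnρ : ¬ ρ a b := fun h' => hnab (Or.inl h')
    have hIor : a ∈ I ∨ b ∈ I := by
      by_contra h'
      push_neg at h'
      exact hnab (Or.inr h')
    rcases hIor with haI | hbI
    · have hnt : Ntangle ρ a bᶜ := by
        simpa [Ntangle, compl_compl] using hnρ
      obtain ⟨c, hcI, h1, h2⟩ := hBC1 a haI bᶜ hnt
      refine ⟨cᶜ, ?_, ?_⟩
      · rintro (h' | ⟨ha', _⟩)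
        · exact h1 h'
        · exact ha' haI
      · rintro (h' | ⟨_, h''⟩)
        · rw [compl_compl] at h'
          exact h2 (by simpa [Ntangle, compl_compl] using hC3 b c h')
        · rw [compl_compl] at h''
          exact h'' hcI
    · have hnt : Ntangle ρ b aᶜ := by
        simpa [Ntangle, compl_compl] using (fun h' => hnρ (hC3 b a h'))
      obtain ⟨c, hcI, h1, h2⟩ := hBC1 b hbI aᶜ hnt
      refine ⟨c, ?_, ?_⟩
      · rintro (h' | ⟨_, hc'⟩)
        · have : ¬ ρ c a := by simpa [Ntangle, compl_compl] using h2
          exact this (hC3 a c h')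
        · exact hc' hcI
      · rintro (h' | ⟨hb', _⟩)
        · exact h1 h'
        · exact hb' hbI
  · -- (C6)
    intro a ha
    have : aᶜ ≠ ⊥ := by
      simp only [ne_eq, compl_eq_bot]
      exact ha
    obtain ⟨b, hbI, hb0, hnt⟩ := hBC3 aᶜ this
    refine ⟨b, hb0, ?_⟩
    rintro (h' | ⟨hb', _⟩)
    · have : ¬ ρ b a := by simpa [Ntangle, compl_compl] using hnt
      exact this h'
    · exact hb' hbI
end

section
/- Let (B,ρ,𝔹) be a local contact algebra with 1 ∉ 𝔹. Then σ_∞ = {b ∈ B | b ∉ 𝔹} is a cluster in the normal contact algebra (B, C_ρ), where aC_ρb iff aρb or a,b ∉ 𝔹. -/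
variable {B : Type*} [BooleanAlgebra B]

/-- If 1 is unbounded, the set of unbounded elements is a cluster in the
Alexandroff extension. -/
theorem unbounded_isCluster (ρ : B → B → Prop) (I : Set B)
    (h : IsLocalContact ρ I) (h1 : (⊤ : B) ∉ I) :
    IsCluster (AlexExt ρ I) {b : B | b ∉ I} := by
  obtain ⟨hC, hI, hBC1, hBC2, hBC3⟩ := h
  obtain ⟨hbot, hdown, hsup⟩ := hI
  refine ⟨⟨⊤, h1⟩, ?_, ?_, ?_⟩
  · intro a ha b hb; exact Or.inr ⟨ha, hb⟩
  · intro a b hab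
    by_contra hc
    push_neg at hc
    simp only [Set.mem_setOf_eq, not_not] at hc
    exact hab (hsup a b hc.1 hc.2)
  · intro a ha
    by_contra haI
    simp only [Set.mem_setOf_eq, not_not] at haI
    have hnt : Ntangle ρ a ⊤ := by
      intro hρ
      simp only [compl_top] at hρ
      exact (hC.2.1 a ⊥ hρ).2 rfl
    obtain ⟨b, hbI, hab, -⟩ := hBC1 a haI ⊤ hnt
    have hbc : bᶜ ∉ I := fun hbc => h1 (by
      have := hsup b bᶜ hbI hbc
      simpa using this)
    have := ha bᶜ hbc
    rcases this with hρ | ⟨haI', -⟩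
    · exact hab hρ
    · exact haI' haI
end

section
/- Let X be a π-regular space and f: X → Y a continuous closed map. Then f is quasi-open if and only if f is skeletal. -/
open Set

variable {X Y : Type*} [TopologicalSpace X] [TopologicalSpace Y]

/-- A function is skeletal if int(f⁻¹(cl V)) ⊆ cl(f⁻¹(V)) for every open V. -/
def Skeletal (f : X → Y) : Prop :=
  ∀ V : Set Y, IsOpen V → interior (f ⁻¹' closure V) ⊆ closure (f ⁻¹' V)

/-- A map is quasi-open if images of non-empty open sets have non-empty
interior. -/
def QuasiOpen (f : X → Y) : Prop :=
  ∀ U : Set X, IsOpen U → U.Nonempty → (interior (f '' U)).Nonempty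

/-- A space is π-regular if every non-empty open set contains the closure of
some non-empty open set. -/
def PiRegular (X : Type*) [TopologicalSpace X] : Prop :=
  ∀ U : Set X, IsOpen U → U.Nonempty →
    ∃ V : Set X, IsOpen V ∧ V.Nonempty ∧ closure V ⊆ U

/-- A set is regular closed if it equals the closure of its interior. -/
def IsRegularClosed (F : Set X) : Prop := closure (interior F) = F

/-- For a continuous closed map on a π-regular space, quasi-open is the same
as skeletal. -/
theorem quasiOpen_iff_skeletal (f : X → Y) (hX : PiRegular X)
    (hf : Continuous f) (hc : IsClosedMap f) :
    QuasiOpen f ↔ Skeletal f := by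
  constructor
  · intro hq V hV x hx
    rw [mem_closure_iff]
    intro W hW hxW
    set U := W ∩ interior (f ⁻¹' closure V) with hU
    have hUopen : IsOpen U := hW.inter isOpen_interior
    have hUne : U.Nonempty := ⟨x, hxW, hx⟩
    obtain ⟨y, hy⟩ := hq U hUopen hUne
    have hsub : f '' U ⊆ closure V := by
      rintro _ ⟨u, hu, rfl⟩
      exact mem_preimage.mp (interior_subset hu.2)
    have hyV : (interior (f '' U) ∩ V).Nonempty := by
      have : y ∈ closure V := (interior_subset.trans hsub) hy
      rw [mem_closure_iff] at this
      exact this _ isOpen_interior hy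
    obtain ⟨z, hz, hzV⟩ := hyV
    obtain ⟨u, hu, rfl⟩ := interior_subset hz
    exact ⟨u, hu.1, hzV⟩
  · intro hs U hU hUne
    obtain ⟨V, hV, hVne, hVcl⟩ := hX U hU hUne
    by_contra h
    rw [not_nonempty_iff_eq_empty] at h
    have hint : interior (f '' closure V) = ∅ := by
      have : f '' closure V ⊆ f '' U := image_mono (f := f) hVcl
      have := interior_mono this
      rw [h] at this
      exact subset_empty_iff.mp this
    set W := (f '' closure V)ᶜ with hW
    have hWopen : IsOpen W := (hc _ isClosed_closure).isOpen_compl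
    have hclW : closure W = univ := by
      rw [closure_compl, hint, compl_empty]
    have h1 : (univ : Set X) ⊆ closure (f ⁻¹' W) := by
      have := hs W hWopen
      rwa [hclW, preimage_univ, interior_univ] at this
    obtain ⟨v, hv⟩ := hVne
    have hv' : v ∈ closure (f ⁻¹' W) := h1 (mem_univ v)
    rw [mem_closure_iff] at hv'
    obtain ⟨z, hz, hzW⟩ := hv' V hV hv
    exact hzW (mem_image_of_mem f (subset_closure hz))
end

section
/- Let f: X → Y be a closed continuous map with X π-regular. Then f is quasi-open if and only if f(F) is regular closed in Y for every regular closed F ⊆ X. In particular, if f: X → Y is quasi-open and closed then f(X) is regular closed in Y. -/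
open Set

variable {X Y : Type*} [TopologicalSpace X] [TopologicalSpace Y]

lemma quasiOpen_image_closed_regularClosed {Z W : Type*} [TopologicalSpace Z]
    [TopologicalSpace W] (g : Z → W) (hg : Continuous g) (hcg : IsClosedMap g)
    (hq : QuasiOpen g) {F : Set Z} (hFc : IsClosed F)
    (hFd : F ⊆ closure (interior F)) : IsRegularClosed (g '' F) := by
  have hcl : IsClosed (g '' F) := hcg F hFc
  apply subset_antisymm (hcl.closure_subset_iff.mpr interior_subset)
  intro y hy
  by_contra hyC
  set C := closure (interior (g '' F)) with hC
  have hCopen : IsOpen (g ⁻¹' Cᶜ) := (isClosed_closure.isOpen_compl).preimage hg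
  have hU : IsOpen (interior F ∩ g ⁻¹' Cᶜ) := isOpen_interior.inter hCopen
  obtain ⟨x, hxF, rfl⟩ := hy
  have hxcl : x ∈ closure (interior F) := hFd hxF
  have hne : (interior F ∩ g ⁻¹' Cᶜ).Nonempty := by
    have := mem_closure_iff.mp hxcl (g ⁻¹' Cᶜ) hCopen hyC
    exact this.imp fun z hz => ⟨hz.2, hz.1⟩
  obtain ⟨w, hw⟩ := hq _ hU hne
  have h1 : w ∈ C :=
    subset_closure (interior_mono (image_mono (f := g) (inter_subset_left.trans interior_subset)) hw)
  have h2 : w ∈ Cᶜ := by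
    have : w ∈ g '' (interior F ∩ g ⁻¹' Cᶜ) := interior_subset hw
    obtain ⟨z, hz, rfl⟩ := this
    exact hz.2
  exact h2 h1

/-- For a closed continuous map on a π-regular space, quasi-openness is
equivalent to preservation of regular closed sets; in particular, any
quasi-open closed continuous map has regular closed image. -/
theorem quasiOpen_iff_image_regularClosed (f : X → Y) (hX : PiRegular X)
    (hf : Continuous f) (hc : IsClosedMap f) :
    (QuasiOpen f ↔
      ∀ F : Set X, IsRegularClosed F → IsRegularClosed (f '' F)) ∧
    (∀ (Z W : Type*) [TopologicalSpace Z] [TopologicalSpace W] (g : Z → W),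
      Continuous g → IsClosedMap g → QuasiOpen g →
      IsRegularClosed (g '' univ)) := by
  constructor
  · constructor
    · intro hq F hF
      have hFc : IsClosed F := hF ▸ isClosed_closure
      exact quasiOpen_image_closed_regularClosed f hf hc hq hFc hF.ge
    · intro h U hU hUne
      obtain ⟨V, hV, hVne, hVcl⟩ := hX U hU hUne
      have hreg : IsRegularClosed (closure V) := by
        apply subset_antisymm
        · exact (closure_mono interior_subset).trans (by rw [closure_closure])
        · exact closure_mono (hV.subset_interior_iff.mpr subset_closure)
      have h2 := h _ hreg
      have hne : (f '' closure V).Nonempty := (hVne.mono subset_closure).image f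
      have hint : (interior (f '' closure V)).Nonempty := by
        by_contra hempty
        rw [not_nonempty_iff_eq_empty] at hempty
        rw [IsRegularClosed, hempty, closure_empty] at h2
        exact hne.ne_empty h2.symm
      exact hint.mono (interior_mono (image_mono (f := f) hVcl))
  · intro Z W _ _ g hg hcg hq
    exact quasiOpen_image_closed_regularClosed g hg hcg hq isClosed_univ
      (by simp)
end
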